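/- Let n, q, m11, m12, m21, m22 be naturals with n ≥ 1, q ≥ 1 and m11, m12, m21, m22 ≤ q. Let W1, W2 be random variables with values in nonempty finite types and let X1, X2 : Ω → (Fin n → (Fin q → ZMod 2)) be random variables such that the pair (W1, X1) is independent of the pair (W2, X2). Define the channel outputs pointwise by y1 t = D_{m11}(X1 t) + D_{m12}(X2 t) and y2 t = D_{m21}(X1 t) + D_{m22}(X2 t). Then I(W1 : y1) − I(W1 : y2) ≤ n · max(0, m11 − (m21 − m22)^+) · log 2, where the arithmetic on the right is over the integers. -/

import Mathlib

open MeasureTheory ProbabilityTheory Real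

set_option linter.unusedSectionVars false
set_option maxHeartbeats 1000000

/-- Shannon entropy (natural logarithm) of a random variable with values in a finite type. -/
noncomputable def entropy {Ω : Type*} [MeasurableSpace Ω] (μ : Measure Ω)
    {S : Type*} [Fintype S] (X : Ω → S) : ℝ :=
  - ∑ x : S, ((μ (X ⁻¹' {x})).toReal * Real.log (μ (X ⁻¹' {x})).toReal)

/-- Conditional entropy H(X | Y) := H(⟨X,Y⟩) − H(Y). -/
noncomputable def condEntropy {Ω : Type*} [MeasurableSpace Ω] (μ : Measure Ω)
    {S T : Type*} [Fintype S] [Fintype T] (X : Ω → S) (Y : Ω → T) : ℝ :=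
  entropy μ (fun ω => (X ω, Y ω)) - entropy μ Y

/-- Mutual information I(X : Y) := H(X) + H(Y) − H(⟨X,Y⟩). -/
noncomputable def mutualInfo {Ω : Type*} [MeasurableSpace Ω] (μ : Measure Ω)
    {S T : Type*} [Fintype S] [Fintype T] (X : Ω → S) (Y : Ω → T) : ℝ :=
  entropy μ X + entropy μ Y - entropy μ (fun ω => (X ω, Y ω))

/-- The shift map `D_m` : multiplication by `S^(q-m)` with `S` the `q × q` lower shift matrix. -/
def Dmap (q m : ℕ) (x : Fin q → ZMod 2) : Fin q → ZMod 2 :=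
  fun i => if _ : q - m ≤ (i : ℕ) then
      x ⟨(i : ℕ) - (q - m), Nat.lt_of_le_of_lt (Nat.sub_le _ _) i.isLt⟩
    else 0

namespace StmtAux

lemma sum3_rot {α β γ : Type*} [Fintype α] [Fintype β] [Fintype γ] (f : α → β → γ → ℝ) :
    ∑ a : α, ∑ b : β, ∑ c : γ, f a b c = ∑ c : γ, ∑ a : α, ∑ b : β, f a b c := by
  have h : ∀ a, (∑ b : β, ∑ c : γ, f a b c) = ∑ c : γ, ∑ b : β, f a b c :=
    fun a => Finset.sum_comm
  simp_rw [h]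
  exact Finset.sum_comm

lemma term_ineq {r pac pbc pc : ℝ} (hr : 0 ≤ r) (h1 : r ≤ pac) (h2 : r ≤ pbc) (h3 : pac ≤ pc) :
    r - pac * pbc / pc ≤
      r * Real.log r + r * Real.log pc - r * Real.log pac - r * Real.log pbc := by
  have hpac : 0 ≤ pac := hr.trans h1
  have hpbc : 0 ≤ pbc := hr.trans h2
  have hpc : 0 ≤ pc := hpac.trans h3
  rcases eq_or_lt_of_le hr with h | h
  · rw [← h]
    simp only [zero_sub, zero_mul, add_zero, sub_zero, zero_add, neg_nonpos]
    positivity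
  · have hpac' : 0 < pac := lt_of_lt_of_le h h1
    have hpbc' : 0 < pbc := lt_of_lt_of_le h h2
    have hpc' : 0 < pc := lt_of_lt_of_le hpac' h3
    set y := pac * pbc / (pc * r) with hy
    have hy0 : 0 < y := by positivity
    have hlog : Real.log y ≤ y - 1 := Real.log_le_sub_one_of_pos hy0
    have hylog : Real.log y = Real.log pac + Real.log pbc - Real.log pc - Real.log r := by
      rw [hy, Real.log_div (by positivity) (by positivity), Real.log_mul hpac'.ne' hpbc'.ne',
        Real.log_mul hpc'.ne' h.ne']
      ring
    have hrne : r ≠ 0 := h.ne'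
    have hpcne : pc ≠ 0 := hpc'.ne'
    have hry : r * y = pac * pbc / pc := by
      rw [hy]
      field_simp
    have e2 : r * Real.log y ≤ r * (y - 1) := mul_le_mul_of_nonneg_left hlog hr
    have e1 : r * Real.log y
        = r * Real.log pac + r * Real.log pbc - r * Real.log pc - r * Real.log r := by
      rw [hylog]; ring
    have e3 : r * (y - 1) = pac * pbc / pc - r := by rw [mul_sub, hry]; ring
    linarith

section Core

variable {Ω : Type*} [MeasurableSpace Ω] (μ : Measure Ω) [IsProbabilityMeasure μ]
variable {S T U D : Type*} [Fintype S] [Fintype T] [Fintype U] [Fintype D]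
  [MeasurableSpace S] [MeasurableSingletonClass S]
  [MeasurableSpace T] [MeasurableSingletonClass T]
  [MeasurableSpace U] [MeasurableSingletonClass U]
  [MeasurableSpace D] [MeasurableSingletonClass D]

lemma ent_eq (X : Ω → S) :
    entropy μ X = ∑ x : S, Real.negMulLog ((μ (X ⁻¹' {x})).toReal) := by
  unfold entropy
  rw [← Finset.sum_neg_distrib]
  congr 1; ext x; rw [Real.negMulLog, neg_mul]

lemma meas_partition (B : Ω → T) (hB : Measurable B) {s : Set Ω} (hs : MeasurableSet s) :
    (μ s).toReal = ∑ b : T, (μ (s ∩ B ⁻¹' {b})).toReal := by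
  rw [← ENNReal.toReal_sum (fun _ _ => measure_ne_top μ _)]
  congr 1
  rw [← measure_biUnion_finset]
  · congr 1; ext ω; simp
  · intro b _ c _ hbc
    refine Set.disjoint_left.2 fun ω h1 h2 => hbc ?_
    have e1 : B ω = b := h1.2
    have e2 : B ω = c := h2.2
    rw [← e1, e2]
  · exact fun b _ => hs.inter (hB (measurableSet_singleton b))

lemma sum_p (X : Ω → S) (hX : Measurable X) : ∑ x : S, (μ (X ⁻¹' {x})).toReal = 1 := by
  have h := meas_partition μ X hX MeasurableSet.univ
  simp only [Set.univ_inter, measure_univ, ENNReal.toReal_one] at h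
  exact h.symm

lemma pre_pair (A : Ω → S) (B : Ω → T) (a : S) (b : T) :
    (fun ω => (A ω, B ω)) ⁻¹' {(a, b)} = A ⁻¹' {a} ∩ B ⁻¹' {b} := by
  ext ω; simp [Prod.ext_iff]

/-- Entropy is invariant under injective post-composition. -/
lemma entropy_comp_inj (X : Ω → S) (g : S → T) (hg : Function.Injective g) :
    entropy μ (fun ω => g (X ω)) = entropy μ X := by
  rw [ent_eq, ent_eq]
  classical
  have h1 : ∑ t : T, Real.negMulLog ((μ ((fun ω => g (X ω)) ⁻¹' {t})).toReal)
      = ∑ t ∈ Finset.univ.image g, Real.negMulLog ((μ ((fun ω => g (X ω)) ⁻¹' {t})).toReal) := by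
    refine (Finset.sum_subset (Finset.subset_univ _) ?_).symm
    intro t _ ht
    have : (fun ω => g (X ω)) ⁻¹' {t} = ∅ := by
      ext ω; simp only [Set.mem_preimage, Set.mem_singleton_iff, Set.mem_empty_iff_false,
        iff_false]
      intro h
      exact ht (Finset.mem_image.2 ⟨X ω, Finset.mem_univ _, h⟩)
    rw [this]
    simp [Real.negMulLog_zero]
  rw [h1, Finset.sum_image (fun x _ y _ h => hg h)]
  refine Finset.sum_congr rfl fun x _ => ?_
  have hset : (fun ω => g (X ω)) ⁻¹' {g x} = X ⁻¹' {x} := by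
    ext ω; simp [hg.eq_iff]
  rw [hset]

/-- H(A) ≤ H(A,B). -/
lemma entropy_le_pair (A : Ω → S) (B : Ω → T) (hA : Measurable A) (hB : Measurable B) :
    entropy μ A ≤ entropy μ (fun ω => (A ω, B ω)) := by
  unfold entropy
  rw [Fintype.sum_prod_type]
  rw [neg_le_neg_iff]
  apply Finset.sum_le_sum
  intro a _
  have hmarg : (μ (A ⁻¹' {a})).toReal
      = ∑ b : T, (μ ((fun ω => (A ω, B ω)) ⁻¹' {(a, b)})).toReal := by
    rw [meas_partition μ B hB (hA (measurableSet_singleton a))]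
    congr 1; ext b; rw [pre_pair]
  rw [hmarg, Finset.sum_mul]
  apply Finset.sum_le_sum
  intro b _
  set r := fun b => (μ ((fun ω => (A ω, B ω)) ⁻¹' {(a, b)})).toReal with hr
  have hrpos : ∀ b, 0 ≤ r b := fun b => ENNReal.toReal_nonneg
  rcases eq_or_lt_of_le (hrpos b) with h | h
  · rw [show (μ ((fun ω => (A ω, B ω)) ⁻¹' {(a, b)})).toReal = r b from rfl, ← h]; simp
  · have hle : r b ≤ ∑ b' : T, r b' :=
      Finset.single_le_sum (fun b' _ => hrpos b') (Finset.mem_univ b)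
    exact mul_le_mul_of_nonneg_left (Real.log_le_log h hle) (hrpos b)

lemma entropy_le_log_card (X : Ω → S) (hX : Measurable X) :
    entropy μ X ≤ Real.log (Fintype.card S) := by
  rcases isEmpty_or_nonempty S with hS | hS
  · exfalso
    have h := sum_p μ X hX
    simp at h
  · set N : ℝ := (Fintype.card S : ℝ) with hNdef
    have hN : 0 < N := by
      rw [hNdef]
      exact_mod_cast Fintype.card_pos
    have term : ∀ x : S, Real.negMulLog ((μ (X ⁻¹' {x})).toReal)
        ≤ 1/N - (μ (X ⁻¹' {x})).toReal + (μ (X ⁻¹' {x})).toReal * Real.log N := by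
      intro x
      set p := (μ (X ⁻¹' {x})).toReal with hpdef
      have hp : 0 ≤ p := ENNReal.toReal_nonneg
      rcases eq_or_lt_of_le hp with h | h
      · rw [← h]
        simp only [Real.negMulLog_zero, sub_zero, zero_mul, add_zero]
        positivity
      · have h1 : Real.log (1/(p*N)) ≤ 1/(p*N) - 1 :=
          Real.log_le_sub_one_of_pos (by positivity)
        have h2 : Real.log (1/(p*N)) = -(Real.log p + Real.log N) := by
          rw [one_div, Real.log_inv, Real.log_mul h.ne' hN.ne']
        have h3 := mul_le_mul_of_nonneg_left h1 hp
        have h4 : p * (1/(p*N) - 1) = 1/N - p := by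
          field_simp
        have h5 : p * Real.log (1/(p*N)) = -(p * Real.log p) - p * Real.log N := by
          rw [h2]; ring
        have h6 : Real.negMulLog p = -(p * Real.log p) := by
          rw [Real.negMulLog]; ring
        linarith
    rw [ent_eq]
    have hsum := Finset.sum_le_sum (s := (Finset.univ : Finset S)) (fun x _ => term x)
    have hrhs : ∑ x : S, (1/N - (μ (X ⁻¹' {x})).toReal
        + (μ (X ⁻¹' {x})).toReal * Real.log N) = Real.log N := by
      rw [Finset.sum_add_distrib, Finset.sum_sub_distrib, ← Finset.sum_mul,
        sum_p μ X hX, Finset.sum_const, Finset.card_univ, nsmul_eq_mul]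
      rw [show ((Fintype.card S : ℝ)) = N from rfl]
      field_simp
      ring
    calc ∑ x : S, Real.negMulLog ((μ (X ⁻¹' {x})).toReal) ≤ _ := hsum
    _ = Real.log N := hrhs

lemma entropy_pair_indep (A : Ω → S) (B : Ω → T) (hA : Measurable A) (hB : Measurable B)
    (h : IndepFun A B μ) :
    entropy μ (fun ω => (A ω, B ω)) = entropy μ A + entropy μ B := by
  rw [ent_eq, ent_eq, ent_eq, Fintype.sum_prod_type]
  have hmul : ∀ (a : S) (b : T), (μ ((fun ω => (A ω, B ω)) ⁻¹' {(a, b)})).toReal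
      = (μ (A ⁻¹' {a})).toReal * (μ (B ⁻¹' {b})).toReal := by
    intro a b
    rw [pre_pair, h.measure_inter_preimage_eq_mul {a} {b} (measurableSet_singleton a)
      (measurableSet_singleton b), ENNReal.toReal_mul]
  simp_rw [hmul, Real.negMulLog_mul]
  have hinner : ∀ a : S, ∑ b : T,
      ((μ (B ⁻¹' {b})).toReal * Real.negMulLog ((μ (A ⁻¹' {a})).toReal)
        + (μ (A ⁻¹' {a})).toReal * Real.negMulLog ((μ (B ⁻¹' {b})).toReal))
      = Real.negMulLog ((μ (A ⁻¹' {a})).toReal)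
        + (μ (A ⁻¹' {a})).toReal * ∑ b : T, Real.negMulLog ((μ (B ⁻¹' {b})).toReal) := by
    intro a
    rw [Finset.sum_add_distrib, ← Finset.sum_mul, sum_p μ B hB, one_mul, ← Finset.mul_sum]
  simp_rw [hinner]
  rw [Finset.sum_add_distrib, ← Finset.sum_mul, sum_p μ A hA, one_mul]

lemma entropy_const (c : T) : entropy μ (fun _ : Ω => c) = 0 := by
  classical
  rw [ent_eq]
  rw [Finset.sum_eq_single c]
  · have h : (fun _ : Ω => c) ⁻¹' {c} = Set.univ := by ext ω; simp
    rw [h]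
    simp [Real.negMulLog]
  · intro b _ hb
    have h : (fun _ : Ω => c) ⁻¹' {b} = ∅ := by
      ext ω; simp [Ne.symm hb]
    rw [h]
    simp [Real.negMulLog_zero]
  · simp

/-- The master inequality: conditional mutual information is nonnegative. -/
lemma master (A : Ω → S) (B : Ω → T) (C : Ω → U)
    (hA : Measurable A) (hB : Measurable B) (hC : Measurable C) :
    entropy μ (fun ω => (A ω, B ω, C ω)) + entropy μ C ≤
      entropy μ (fun ω => (A ω, C ω)) + entropy μ (fun ω => (B ω, C ω)) := by
  classical
  set r : S → T → U → ℝ :=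
    fun a b c => (μ (A ⁻¹' {a} ∩ (B ⁻¹' {b} ∩ C ⁻¹' {c}))).toReal with hrdef
  set pAC : S → U → ℝ := fun a c => (μ (A ⁻¹' {a} ∩ C ⁻¹' {c})).toReal with hpACdef
  set pBC : T → U → ℝ := fun b c => (μ (B ⁻¹' {b} ∩ C ⁻¹' {c})).toReal with hpBCdef
  set pC : U → ℝ := fun c => (μ (C ⁻¹' {c})).toReal with hpCdef
  have hr0 : ∀ a b c, 0 ≤ r a b c := fun _ _ _ => ENNReal.toReal_nonneg
  have hpAC0 : ∀ a c, 0 ≤ pAC a c := fun _ _ => ENNReal.toReal_nonneg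
  have hpBC0 : ∀ b c, 0 ≤ pBC b c := fun _ _ => ENNReal.toReal_nonneg
  have hACr : ∀ a c, pAC a c = ∑ b : T, r a b c := by
    intro a c
    rw [show pAC a c = (μ (A ⁻¹' {a} ∩ C ⁻¹' {c})).toReal from rfl,
      meas_partition μ B hB ((hA (measurableSet_singleton a)).inter
        (hC (measurableSet_singleton c)))]
    refine Finset.sum_congr rfl fun b _ => ?_
    refine congrArg _ (congrArg _ ?_)
    ext ω
    simp only [Set.mem_inter_iff, Set.mem_preimage, Set.mem_singleton_iff]
    tauto
  have hBCr : ∀ b c, pBC b c = ∑ a : S, r a b c := by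
    intro b c
    rw [show pBC b c = (μ (B ⁻¹' {b} ∩ C ⁻¹' {c})).toReal from rfl,
      meas_partition μ A hA ((hB (measurableSet_singleton b)).inter
        (hC (measurableSet_singleton c)))]
    refine Finset.sum_congr rfl fun a _ => ?_
    refine congrArg _ (congrArg _ ?_)
    ext ω
    simp only [Set.mem_inter_iff, Set.mem_preimage, Set.mem_singleton_iff]
    tauto
  have hCA : ∀ c, pC c = ∑ a : S, pAC a c := by
    intro c
    rw [show pC c = (μ (C ⁻¹' {c})).toReal from rfl,
      meas_partition μ A hA (hC (measurableSet_singleton c))]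
    refine Finset.sum_congr rfl fun a _ => ?_
    refine congrArg _ (congrArg _ ?_)
    ext ω
    simp only [Set.mem_inter_iff, Set.mem_preimage, Set.mem_singleton_iff]
    tauto
  have hCB : ∀ c, pC c = ∑ b : T, pBC b c := by
    intro c
    rw [show pC c = (μ (C ⁻¹' {c})).toReal from rfl,
      meas_partition μ B hB (hC (measurableSet_singleton c))]
    refine Finset.sum_congr rfl fun b _ => ?_
    refine congrArg _ (congrArg _ ?_)
    ext ω
    simp only [Set.mem_inter_iff, Set.mem_preimage, Set.mem_singleton_iff]
    tauto
  have hCsum : ∑ c : U, pC c = 1 := sum_p μ C hC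
  have e_ABC : entropy μ (fun ω => (A ω, B ω, C ω))
      = -∑ a : S, ∑ b : T, ∑ c : U, r a b c * Real.log (r a b c) := by
    unfold entropy
    congr 1
    rw [Fintype.sum_prod_type]
    refine Finset.sum_congr rfl fun a _ => ?_
    rw [Fintype.sum_prod_type]
    refine Finset.sum_congr rfl fun b _ => ?_
    refine Finset.sum_congr rfl fun c _ => ?_
    have hset : (fun ω => (A ω, B ω, C ω)) ⁻¹' {(a, b, c)}
        = A ⁻¹' {a} ∩ (B ⁻¹' {b} ∩ C ⁻¹' {c}) := by
      ext ω; simp [Prod.ext_iff]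
    rw [hset]
  have e_AC : entropy μ (fun ω => (A ω, C ω))
      = -∑ a : S, ∑ b : T, ∑ c : U, r a b c * Real.log (pAC a c) := by
    unfold entropy
    congr 1
    rw [Fintype.sum_prod_type]
    refine Finset.sum_congr rfl fun a _ => ?_
    have h1 : ∀ c, (μ ((fun ω => (A ω, C ω)) ⁻¹' {(a, c)})).toReal = pAC a c := by
      intro c; rw [pre_pair]
    simp_rw [h1]
    have h2 : ∀ c : U, pAC a c * Real.log (pAC a c)
        = ∑ b : T, r a b c * Real.log (pAC a c) := by
      intro c
      nth_rewrite 1 [hACr a c]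
      rw [Finset.sum_mul]
    simp_rw [h2]
    exact Finset.sum_comm
  have e_BC : entropy μ (fun ω => (B ω, C ω))
      = -∑ a : S, ∑ b : T, ∑ c : U, r a b c * Real.log (pBC b c) := by
    unfold entropy
    congr 1
    rw [Fintype.sum_prod_type]
    rw [← sum3_rot (fun b c a => r a b c * Real.log (pBC b c))]
    refine Finset.sum_congr rfl fun b _ => ?_
    have h1 : ∀ c, (μ ((fun ω => (B ω, C ω)) ⁻¹' {(b, c)})).toReal = pBC b c := by
      intro c; rw [pre_pair]
    simp_rw [h1]
    refine Finset.sum_congr rfl fun c _ => ?_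
    nth_rewrite 1 [hBCr b c]
    rw [Finset.sum_mul]
  have e_C : entropy μ C = -∑ a : S, ∑ b : T, ∑ c : U, r a b c * Real.log (pC c) := by
    unfold entropy
    congr 1
    rw [sum3_rot (fun a b c => r a b c * Real.log (pC c))]
    refine Finset.sum_congr rfl fun c _ => ?_
    have h1 : (μ (C ⁻¹' {c})).toReal = pC c := rfl
    rw [h1]
    nth_rewrite 1 [hCA c]
    rw [Finset.sum_mul]
    refine Finset.sum_congr rfl fun a _ => ?_
    nth_rewrite 1 [hACr a c]
    rw [Finset.sum_mul]
  have sumr : ∑ a : S, ∑ b : T, ∑ c : U, r a b c = 1 := by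
    rw [sum3_rot]
    have h1 : ∀ c, (∑ a : S, ∑ b : T, r a b c) = pC c := by
      intro c
      rw [hCA c]
      exact Finset.sum_congr rfl fun a _ => (hACr a c).symm
    simp_rw [h1]
    exact hCsum
  have sumdiv : ∑ a : S, ∑ b : T, ∑ c : U, pAC a c * pBC b c / pC c = 1 := by
    rw [sum3_rot]
    have h1 : ∀ c, (∑ a : S, ∑ b : T, pAC a c * pBC b c / pC c) = pC c := by
      intro c
      rcases eq_or_ne (pC c) 0 with h0 | h0
      · simp [h0]
      · have h2 : ∑ a : S, ∑ b : T, pAC a c * pBC b c / pC c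
            = (∑ a : S, pAC a c) * (∑ b : T, pBC b c) / pC c := by
          rw [Finset.sum_mul_sum, Finset.sum_div]
          exact Finset.sum_congr rfl fun a _ => by rw [Finset.sum_div]
        rw [h2, ← hCA, ← hCB, mul_div_assoc, div_self h0, mul_one]
    simp_rw [h1]
    exact hCsum
  have key : ∀ a b c, r a b c - pAC a c * pBC b c / pC c ≤
      r a b c * Real.log (r a b c) + r a b c * Real.log (pC c)
        - r a b c * Real.log (pAC a c) - r a b c * Real.log (pBC b c) := by
    intro a b c
    refine term_ineq (hr0 a b c) ?_ ?_ ?_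
    · rw [hACr a c]
      exact Finset.single_le_sum (fun b' _ => hr0 a b' c) (Finset.mem_univ b)
    · rw [hBCr b c]
      exact Finset.single_le_sum (fun a' _ => hr0 a' b c) (Finset.mem_univ a)
    · rw [hCA c]
      exact Finset.single_le_sum (fun a' _ => hpAC0 a' c) (Finset.mem_univ a)
  have big : (0:ℝ) ≤ ∑ a : S, ∑ b : T, ∑ c : U,
      (r a b c * Real.log (r a b c) + r a b c * Real.log (pC c)
        - r a b c * Real.log (pAC a c) - r a b c * Real.log (pBC b c)) := by
    have hle : ∑ a : S, ∑ b : T, ∑ c : U, (r a b c - pAC a c * pBC b c / pC c)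
        ≤ ∑ a : S, ∑ b : T, ∑ c : U,
          (r a b c * Real.log (r a b c) + r a b c * Real.log (pC c)
            - r a b c * Real.log (pAC a c) - r a b c * Real.log (pBC b c)) :=
      Finset.sum_le_sum fun a _ => Finset.sum_le_sum fun b _ =>
        Finset.sum_le_sum fun c _ => key a b c
    have heq : ∑ a : S, ∑ b : T, ∑ c : U, (r a b c - pAC a c * pBC b c / pC c) = 0 := by
      simp only [Finset.sum_sub_distrib]
      rw [sumr, sumdiv]
      ring
    linarith
  rw [e_ABC, e_AC, e_BC, e_C]
  have expand : ∑ a : S, ∑ b : T, ∑ c : U,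
      (r a b c * Real.log (r a b c) + r a b c * Real.log (pC c)
        - r a b c * Real.log (pAC a c) - r a b c * Real.log (pBC b c))
      = (∑ a : S, ∑ b : T, ∑ c : U, r a b c * Real.log (r a b c))
        + (∑ a : S, ∑ b : T, ∑ c : U, r a b c * Real.log (pC c))
        - (∑ a : S, ∑ b : T, ∑ c : U, r a b c * Real.log (pAC a c))
        - (∑ a : S, ∑ b : T, ∑ c : U, r a b c * Real.log (pBC b c)) := by
    simp only [Finset.sum_add_distrib, Finset.sum_sub_distrib]
  rw [expand] at big
  linarith

/-- Subadditivity of entropy. -/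
lemma entropy_pair_le (A : Ω → S) (B : Ω → T) (hA : Measurable A) (hB : Measurable B) :
    entropy μ (fun ω => (A ω, B ω)) ≤ entropy μ A + entropy μ B := by
  have hm := master μ A B (fun _ : Ω => (0 : Fin 1)) hA hB measurable_const
  have eC : entropy μ (fun _ : Ω => (0 : Fin 1)) = 0 := entropy_const μ _
  have eAC : entropy μ (fun ω => (A ω, (0 : Fin 1))) = entropy μ A := by
    have h : Function.Injective (fun a : S => (a, (0 : Fin 1))) := fun a b h => by
      simpa using congrArg Prod.fst h
    exact entropy_comp_inj μ A _ h
  have eBC : entropy μ (fun ω => (B ω, (0 : Fin 1))) = entropy μ B := by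
    have h : Function.Injective (fun b : T => (b, (0 : Fin 1))) := fun a b h => by
      simpa using congrArg Prod.fst h
    exact entropy_comp_inj μ B _ h
  have eABC : entropy μ (fun ω => (A ω, B ω, (0 : Fin 1)))
      = entropy μ (fun ω => (A ω, B ω)) := by
    have h : Function.Injective (fun p : S × T => (p.1, p.2, (0 : Fin 1))) := by
      intro p q h
      simp only [Prod.mk.injEq] at h
      exact Prod.ext h.1 h.2.1
    exact entropy_comp_inj μ (fun ω => (A ω, B ω)) _ h
  linarith

/-- Data processing: mutual information cannot increase under a function of one argument. -/
lemma mutualInfo_comp_le (W : Ω → D) (Z : Ω → S) (g : S → T)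
    (hW : Measurable W) (hZ : Measurable Z) :
    mutualInfo μ W (fun ω => g (Z ω)) ≤ mutualInfo μ W Z := by
  have hg : Measurable g := measurable_of_countable g
  have hm := master μ W Z (fun ω => g (Z ω)) hW hZ (hg.comp hZ)
  have e1 : entropy μ (fun ω => (Z ω, g (Z ω))) = entropy μ Z := by
    have h : Function.Injective (fun z : S => (z, g z)) := fun a b h => by
      simpa using congrArg Prod.fst h
    exact entropy_comp_inj μ Z _ h
  have e2 : entropy μ (fun ω => (W ω, Z ω, g (Z ω)))
      = entropy μ (fun ω => (W ω, Z ω)) := by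
    have h : Function.Injective (fun p : D × S => (p.1, p.2, g p.2)) := by
      intro p q h
      simp only [Prod.mk.injEq] at h
      exact Prod.ext h.1 h.2.1
    exact entropy_comp_inj μ (fun ω => (W ω, Z ω)) _ h
  unfold mutualInfo
  rw [e1, e2] at hm
  linarith

end Core

/-- The top `a` bits of each block. -/
def Tmap (n q a : ℕ) (ha : a ≤ q) (x : Fin n → Fin q → ZMod 2) : Fin n → Fin a → ZMod 2 :=
  fun t j => x t ⟨j.1, lt_of_lt_of_le j.2 ha⟩

/-- Bits `a, …, a+r-1` of each block. -/
def Umap (n q a r : ℕ) (h : a + r ≤ q) (x : Fin n → Fin q → ZMod 2) : Fin n → Fin r → ZMod 2 :=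
  fun t j => x t ⟨a + j.1, by have := j.isLt; omega⟩

/-- Reconstruction of `y1` from `(T, U, V)`. -/
def Fmap (n q m11 a r : ℕ) (h11 : m11 ≤ q) (hra : m11 ≤ a + r)
    (p : (Fin n → Fin a → ZMod 2) × (Fin n → Fin r → ZMod 2) × (Fin n → Fin q → ZMod 2)) :
    Fin n → Fin q → ZMod 2 :=
  fun t i =>
    (if h : q - m11 ≤ (i : ℕ) then
      (if hk : (i : ℕ) - (q - m11) < a then p.1 t ⟨(i : ℕ) - (q - m11), hk⟩
       else p.2.1 t ⟨(i : ℕ) - (q - m11) - a, by have := i.isLt; omega⟩)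
     else 0) + p.2.2 t i

/-- Extraction of `T` from `y2`. -/
def Gmap (n q m21 a : ℕ) (h1 : a ≤ m21) (h2 : m21 ≤ q) (y : Fin n → Fin q → ZMod 2) :
    Fin n → Fin a → ZMod 2 :=
  fun t j => y t ⟨q - m21 + j.1, by have := j.isLt; omega⟩

end StmtAux

theorem stmt8 {Ω : Type*} [MeasurableSpace Ω] (μ : Measure Ω) [IsProbabilityMeasure μ]
    (n q m11 m12 m21 m22 : ℕ) (hn : 1 ≤ n) (hq : 1 ≤ q)
    (h11 : m11 ≤ q) (h12 : m12 ≤ q) (h21 : m21 ≤ q) (h22 : m22 ≤ q)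
    {D1 D2 : Type*} [Fintype D1] [Nonempty D1] [MeasurableSpace D1] [DiscreteMeasurableSpace D1]
    [Fintype D2] [Nonempty D2] [MeasurableSpace D2] [DiscreteMeasurableSpace D2]
    (W1 : Ω → D1) (W2 : Ω → D2) (X1 X2 : Ω → (Fin n → Fin q → ZMod 2))
    (hW1 : Measurable W1) (hW2 : Measurable W2) (hX1 : Measurable X1) (hX2 : Measurable X2)
    (hIndep : IndepFun (fun ω => (W1 ω, X1 ω)) (fun ω => (W2 ω, X2 ω)) μ)
    (y1 y2 : Ω → (Fin n → Fin q → ZMod 2))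
    (hy1 : ∀ ω t, y1 ω t = Dmap q m11 (X1 ω t) + Dmap q m12 (X2 ω t))
    (hy2 : ∀ ω t, y2 ω t = Dmap q m21 (X1 ω t) + Dmap q m22 (X2 ω t)) :
    mutualInfo μ W1 y1 - mutualInfo μ W1 y2 ≤
      (n : ℝ) * ((max 0 ((m11 : ℤ) - max ((m21 : ℤ) - (m22 : ℤ)) 0) : ℤ) : ℝ) * Real.log 2 := by
  classical
  obtain ⟨a, ha⟩ : ∃ a, a = m21 - m22 := ⟨_, rfl⟩
  obtain ⟨r, hr⟩ : ∃ r, r = m11 - a := ⟨_, rfl⟩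
  have haq : a ≤ m21 := by omega
  have haq' : a ≤ q := by omega
  have harq : a + r ≤ q := by omega
  have hm11ar : m11 ≤ a + r := by omega
  set T : Ω → (Fin n → Fin a → ZMod 2) := fun ω => StmtAux.Tmap n q a haq' (X1 ω) with hTdef
  set U : Ω → (Fin n → Fin r → ZMod 2) := fun ω => StmtAux.Umap n q a r harq (X1 ω) with hUdef
  set V : Ω → (Fin n → Fin q → ZMod 2) :=
    fun ω => (fun t => Dmap q m12 (X2 ω t)) with hVdef
  have hTm : Measurable T :=
    (measurable_of_countable (StmtAux.Tmap n q a haq')).comp hX1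
  have hUm : Measurable U :=
    (measurable_of_countable (StmtAux.Umap n q a r harq)).comp hX1
  have hVm : Measurable V :=
    (measurable_of_countable
      (fun x : Fin n → Fin q → ZMod 2 => (fun t => Dmap q m12 (x t)))).comp hX2
  have hy2m : Measurable y2 := by
    have hy2e : y2 = fun ω =>
        (fun x : (Fin n → Fin q → ZMod 2) × (Fin n → Fin q → ZMod 2) =>
          (fun t => Dmap q m21 (x.1 t) + Dmap q m22 (x.2 t))) (X1 ω, X2 ω) := by
      funext ω t
      exact hy2 ω t
    rw [hy2e]
    exact (measurable_of_countable
      (fun x : (Fin n → Fin q → ZMod 2) × (Fin n → Fin q → ZMod 2) =>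
        (fun t => Dmap q m21 (x.1 t) + Dmap q m22 (x.2 t)))).comp (hX1.prodMk hX2)
  -- y1 is a function of (T, U, V)
  have hFy1 : y1 = fun ω => StmtAux.Fmap n q m11 a r h11 hm11ar (T ω, U ω, V ω) := by
    funext ω t i
    rw [hy1 ω t, Pi.add_apply]
    simp only [StmtAux.Fmap]
    congr 1
    simp only [Dmap]
    by_cases hi : q - m11 ≤ (i : ℕ)
    · rw [dif_pos hi, dif_pos hi]
      by_cases hk : (i : ℕ) - (q - m11) < a
      · rw [dif_pos hk]
        rfl
      · rw [dif_neg hk]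
        simp only [hUdef, StmtAux.Umap]
        congr 1
        simp only [Fin.mk.injEq]
        omega
    · rw [dif_neg hi, dif_neg hi]
  -- T is a function of y2
  have hGT : T = fun ω => StmtAux.Gmap n q m21 a haq h21 (y2 ω) := by
    funext ω t j
    simp only [hTdef, StmtAux.Tmap, StmtAux.Gmap]
    rw [hy2 ω t, Pi.add_apply]
    simp only [Dmap]
    rw [dif_pos (Nat.le_add_right _ _), dif_neg (by have := j.isLt; omega : ¬ q - m22 ≤ q - m21 + (j : ℕ))]
    rw [add_zero]
    congr 1
    simp only [Fin.mk.injEq]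
    omega
  -- independence facts
  have hIndTV : IndepFun T V μ := by
    have h := hIndep.comp
      (φ := fun p : D1 × (Fin n → Fin q → ZMod 2) => StmtAux.Tmap n q a haq' p.2)
      (ψ := fun p : D2 × (Fin n → Fin q → ZMod 2) => (fun t => Dmap q m12 (p.2 t)))
      (measurable_of_countable _) (measurable_of_countable _)
    exact h
  have hIndWTV : IndepFun (fun ω => (W1 ω, T ω)) V μ := by
    have h := hIndep.comp
      (φ := fun p : D1 × (Fin n → Fin q → ZMod 2) => (p.1, StmtAux.Tmap n q a haq' p.2))
      (ψ := fun p : D2 × (Fin n → Fin q → ZMod 2) => (fun t => Dmap q m12 (p.2 t)))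
      (measurable_of_countable _) (measurable_of_countable _)
    exact h
  -- Step 1 : I(W1 : y1) ≤ I(W1 : (T,U,V))
  have step1 : mutualInfo μ W1 y1 ≤ mutualInfo μ W1 (fun ω => (T ω, U ω, V ω)) := by
    rw [hFy1]
    exact StmtAux.mutualInfo_comp_le μ W1 (fun ω => (T ω, U ω, V ω))
      (StmtAux.Fmap n q m11 a r h11 hm11ar) hW1 (hTm.prodMk (hUm.prodMk hVm))
  -- Step 2 : I(W1 : (T,U,V)) ≤ H(U) + I(W1 : (T,V))
  have step2 : mutualInfo μ W1 (fun ω => (T ω, U ω, V ω))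
      ≤ entropy μ U + mutualInfo μ W1 (fun ω => (T ω, V ω)) := by
    have e : entropy μ (fun ω => (T ω, U ω, V ω)) = entropy μ (fun ω => (U ω, (T ω, V ω))) := by
      have hinj : Function.Injective
          (fun p : (Fin n → Fin r → ZMod 2) ×
            ((Fin n → Fin a → ZMod 2) × (Fin n → Fin q → ZMod 2)) =>
              (p.2.1, p.1, p.2.2)) := by
        intro p q h
        simp only [Prod.mk.injEq] at h
        exact Prod.ext h.2.1 (Prod.ext h.1 h.2.2)
      exact StmtAux.entropy_comp_inj μ (fun ω => (U ω, (T ω, V ω))) _ hinj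
    have hZle : entropy μ (fun ω => (T ω, U ω, V ω))
        ≤ entropy μ U + entropy μ (fun ω => (T ω, V ω)) := by
      rw [e]
      exact StmtAux.entropy_pair_le μ U (fun ω => (T ω, V ω)) hUm (hTm.prodMk hVm)
    have h1 : entropy μ (fun ω => (W1 ω, T ω, V ω))
        ≤ entropy μ (fun ω => ((W1 ω, T ω, V ω), U ω)) :=
      StmtAux.entropy_le_pair μ (fun ω => (W1 ω, T ω, V ω)) U
        (hW1.prodMk (hTm.prodMk hVm)) hUm
    have h2 : entropy μ (fun ω => ((W1 ω, T ω, V ω), U ω))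
        = entropy μ (fun ω => (W1 ω, T ω, U ω, V ω)) := by
      have hinj : Function.Injective
          (fun p : (D1 × (Fin n → Fin a → ZMod 2) × (Fin n → Fin q → ZMod 2)) ×
            (Fin n → Fin r → ZMod 2) => (p.1.1, p.1.2.1, p.2, p.1.2.2)) := by
        intro p q h
        simp only [Prod.mk.injEq] at h
        exact Prod.ext (Prod.ext h.1 (Prod.ext h.2.1 h.2.2.2)) h.2.2.1
      exact (StmtAux.entropy_comp_inj μ (fun ω => ((W1 ω, T ω, V ω), U ω)) _ hinj).symm
    simp only [mutualInfo]
    have h3 : entropy μ (fun ω => (W1 ω, T ω, V ω))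
        ≤ entropy μ (fun ω => (W1 ω, T ω, U ω, V ω)) := h2 ▸ h1
    linarith
  -- Step 3 : I(W1 : (T,V)) = I(W1 : T)
  have step3 : mutualInfo μ W1 (fun ω => (T ω, V ω)) = mutualInfo μ W1 T := by
    have hTV : entropy μ (fun ω => (T ω, V ω)) = entropy μ T + entropy μ V :=
      StmtAux.entropy_pair_indep μ T V hTm hVm hIndTV
    have hasc : entropy μ (fun ω => (W1 ω, T ω, V ω))
        = entropy μ (fun ω => ((W1 ω, T ω), V ω)) := by
      have hinj : Function.Injective
          (fun p : (D1 × (Fin n → Fin a → ZMod 2)) × (Fin n → Fin q → ZMod 2) =>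
            (p.1.1, p.1.2, p.2)) := by
        intro p q h
        simp only [Prod.mk.injEq] at h
        exact Prod.ext (Prod.ext h.1 h.2.1) h.2.2
      exact StmtAux.entropy_comp_inj μ (fun ω => ((W1 ω, T ω), V ω)) _ hinj
    have hWTV : entropy μ (fun ω => ((W1 ω, T ω), V ω))
        = entropy μ (fun ω => (W1 ω, T ω)) + entropy μ V :=
      StmtAux.entropy_pair_indep μ (fun ω => (W1 ω, T ω)) V (hW1.prodMk hTm) hVm hIndWTV
    simp only [mutualInfo]
    rw [hTV, hasc, hWTV]
    ring
  -- Step 4 : I(W1 : T) ≤ I(W1 : y2)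
  have step4 : mutualInfo μ W1 T ≤ mutualInfo μ W1 y2 := by
    rw [hGT]
    exact StmtAux.mutualInfo_comp_le μ W1 y2 (StmtAux.Gmap n q m21 a haq h21) hW1 hy2m
  -- Step 5 : H(U) ≤ n r log 2
  have step5 : entropy μ U ≤ (n : ℝ) * (r : ℝ) * Real.log 2 := by
    have h := StmtAux.entropy_le_log_card μ U hUm
    have hcard : Fintype.card (Fin n → Fin r → ZMod 2) = 2 ^ (r * n) := by
      rw [Fintype.card_fun, Fintype.card_fun, Fintype.card_fin, Fintype.card_fin,
        ZMod.card, ← pow_mul]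
    rw [hcard] at h
    have hlog : Real.log ((2 ^ (r * n) : ℕ) : ℝ) = (n : ℝ) * (r : ℝ) * Real.log 2 := by
      push_cast
      rw [Real.log_pow]
      push_cast
      ring
    calc entropy μ U ≤ Real.log ((2 ^ (r * n) : ℕ) : ℝ) := h
    _ = (n : ℝ) * (r : ℝ) * Real.log 2 := hlog
  -- conclusion
  have hrhs : ((max 0 ((m11 : ℤ) - max ((m21 : ℤ) - (m22 : ℤ)) 0) : ℤ) : ℝ) = (r : ℝ) := by
    have h : (max 0 ((m11 : ℤ) - max ((m21 : ℤ) - (m22 : ℤ)) 0) : ℤ) = (r : ℤ) := by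
      omega
    rw [h]
    exact_mod_cast rfl
  rw [hrhs]
  linarith
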